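/- Let β > 0, let φ ∈ ℝ be a phase, and let f : (0,∞) × S² → ℂ be measurable with ∫_{(0,∞)×S²} (1 + 2/(e^{βu} − 1)) |f(u,σ)|² u² du dσ < ∞. Then the function τ_β f belongs to L²(ℝ × S², du ⊗ dσ) and its squared L²-norm satisfies ‖τ_β f‖²_{L²(ℝ×S²)} = ∫_{(0,∞)×S²} (1 + 2/(e^{βu} − 1)) |f(u,σ)|² u² du dσ; that is, the Araki–Woods gluing map τ_β reproduces the black-body (Planck) weight 1 + 2/(e^{β|k|} − 1) of the thermal expectation functional. -/

import Mathlib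

open MeasureTheory

/-- The unit sphere `S² ⊆ ℝ³`. -/
abbrev unitSphere2 : Set (EuclideanSpace ℝ (Fin 3)) := Metric.sphere 0 1

/-- The surface measure `dσ` on the unit sphere `S² ⊆ ℝ³`. -/
noncomputable def sphereMeasure : Measure unitSphere2 :=
  (volume : Measure (EuclideanSpace ℝ (Fin 3))).toSphere

instance : IsFiniteMeasure sphereMeasure := by
  unfold sphereMeasure; infer_instance


/-- The Araki–Woods gluing map `τ_β` (with phase `φ`): for `f` the polar-coordinate
representation of a one-particle wave function,
`(τ_β f)(u,σ) = √(u/(1 − e^{−βu})) √u f(u,σ)` for `u > 0`, and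
`(τ_β f)(u,σ) = √(u/(1 − e^{−βu})) √(−u) e^{iφ} conj(f(−u,σ))` for `u < 0`. -/
noncomputable def tauBeta {Ω : Type*} (β φ : ℝ) (f : ℝ × Ω → ℂ) : ℝ × Ω → ℂ := fun q =>
  if 0 < q.1 then
    ((Real.sqrt (q.1 / (1 - Real.exp (-(β * q.1)))) * Real.sqrt q.1 : ℝ) : ℂ) * f q
  else if q.1 < 0 then
    ((Real.sqrt (q.1 / (1 - Real.exp (-(β * q.1)))) * Real.sqrt (-q.1) : ℝ) : ℂ) *
      Complex.exp (Complex.I * (φ : ℂ)) * (starRingEnd ℂ) (f (-q.1, q.2))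
  else 0

lemma measurable_tauBeta {Ω : Type*} [MeasurableSpace Ω] (β φ : ℝ) {f : ℝ × Ω → ℂ}
    (hf : Measurable f) : Measurable (tauBeta β φ f) := by
  unfold tauBeta
  have h1 : MeasurableSet {q : ℝ × Ω | 0 < q.1} :=
    measurableSet_lt measurable_const measurable_fst
  have h2 : MeasurableSet {q : ℝ × Ω | q.1 < 0} :=
    measurableSet_lt measurable_fst measurable_const
  have hc : Measurable fun q : ℝ × Ω =>
      ((Real.sqrt (q.1 / (1 - Real.exp (-(β * q.1)))) : ℝ) : ℂ) := by
    apply Complex.measurable_ofReal.comp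
    exact (measurable_fst.div
      (measurable_const.sub ((measurable_const.mul measurable_fst).neg.exp))).sqrt
  refine Measurable.ite h1 ?_ (Measurable.ite h2 ?_ measurable_const)
  · have : Measurable fun q : ℝ × Ω => ((Real.sqrt q.1 : ℝ) : ℂ) :=
      Complex.measurable_ofReal.comp measurable_fst.sqrt
    simpa [Complex.ofReal_mul, mul_assoc, Pi.mul_def] using (hc.mul this).mul hf
  · have h3 : Measurable fun q : ℝ × Ω => ((Real.sqrt (-q.1) : ℝ) : ℂ) :=
      Complex.measurable_ofReal.comp measurable_fst.neg.sqrt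
    have h4 : Measurable fun q : ℝ × Ω => (starRingEnd ℂ) (f (-q.1, q.2)) :=
      (Complex.continuous_conj.measurable).comp
        (hf.comp (measurable_fst.neg.prodMk measurable_snd))
    simpa [Complex.ofReal_mul, mul_assoc, Pi.mul_def] using
      (((hc.mul h3).mul measurable_const).mul h4)

lemma norm_sq_tauBeta_pos {Ω : Type*} (β φ : ℝ) (hβ : 0 < β) (f : ℝ × Ω → ℂ)
    {u : ℝ} (hu : 0 < u) (σ : Ω) :
    ‖tauBeta β φ f (u, σ)‖ ^ 2
      = (1 + 1 / (Real.exp (β * u) - 1)) * ‖f (u, σ)‖ ^ 2 * u ^ 2 := by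
  have hE : 1 < Real.exp (β * u) := by
    have := Real.exp_lt_exp.mpr (show (0:ℝ) < β * u by positivity)
    rwa [Real.exp_zero] at this
  have hE0 : (0:ℝ) < Real.exp (β * u) := by positivity
  have hx : 0 ≤ u / (1 - Real.exp (-(β * u))) := by
    apply div_nonneg hu.le
    rw [Real.exp_neg]
    have : (Real.exp (β * u))⁻¹ < 1 := inv_lt_one_of_one_lt₀ hE
    linarith
  rw [tauBeta]
  simp only [hu, if_pos]
  rw [norm_mul, Complex.norm_real, Real.norm_eq_abs,
    abs_of_nonneg (mul_nonneg (Real.sqrt_nonneg _) (Real.sqrt_nonneg _))]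
  rw [mul_pow, mul_pow, Real.sq_sqrt hx, Real.sq_sqrt hu.le]
  rw [Real.exp_neg]
  have h1 : Real.exp (β * u) - 1 ≠ 0 := by linarith
  field_simp
  ring_nf
  have hX : (-1 + Real.exp (u * β)) * (-1 + Real.exp (u * β))⁻¹ = 1 :=
    mul_inv_cancel₀ (by rw [mul_comm]; linarith)
  linear_combination ‖f (u, σ)‖ ^ 2 * hX

lemma norm_sq_tauBeta_neg {Ω : Type*} (β φ : ℝ) (hβ : 0 < β) (f : ℝ × Ω → ℂ)
    {v : ℝ} (hv : 0 < v) (σ : Ω) :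
    ‖tauBeta β φ f (-v, σ)‖ ^ 2
      = (1 / (Real.exp (β * v) - 1)) * ‖f (v, σ)‖ ^ 2 * v ^ 2 := by
  have hE : 1 < Real.exp (β * v) := by
    have := Real.exp_lt_exp.mpr (show (0:ℝ) < β * v by positivity)
    rwa [Real.exp_zero] at this
  have hx : 0 ≤ (-v) / (1 - Real.exp (-(β * -v))) := by
    rw [div_nonneg_iff]
    right
    constructor
    · linarith
    · have : -(β * -v) = β * v := by ring
      rw [this]; linarith
  rw [tauBeta]
  simp only [show ¬ (0:ℝ) < -v by linarith, if_neg, not_false_iff,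
    show (-v:ℝ) < 0 by linarith, if_pos, neg_neg]
  rw [norm_mul, norm_mul, Complex.norm_real, Real.norm_eq_abs,
    abs_of_nonneg (mul_nonneg (Real.sqrt_nonneg _) (Real.sqrt_nonneg _)),
    Complex.norm_exp, RCLike.norm_conj]
  have hre : (Complex.I * (φ:ℂ)).re = 0 := by simp
  rw [hre, Real.exp_zero, mul_one]
  rw [mul_pow, mul_pow, Real.sq_sqrt hx, Real.sq_sqrt hv.le]
  have harg : -(β * -v) = β * v := by ring
  rw [harg, ]
  have h1 : Real.exp (β * v) - 1 ≠ 0 := by linarith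
  have h2 : 1 - Real.exp (β * v) ≠ 0 := by linarith
  field_simp
  ring_nf
  rw [show (1 - Real.exp (v * β)) = -(-1 + Real.exp (v * β)) by ring, inv_neg]
  ring



/-- Let `β > 0`, `φ ∈ ℝ`, and let `f : (0,∞) × S² → ℂ` be measurable with
`∫ (1 + 2/(e^{βu} − 1)) |f(u,σ)|² u² du dσ < ∞`.  Then `τ_β f ∈ L²(ℝ × S², du ⊗ dσ)` and
`‖τ_β f‖²_{L²} = ∫_{(0,∞)×S²} (1 + 2/(e^{βu} − 1)) |f(u,σ)|² u² du dσ`: the Araki–Woods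
gluing map reproduces the black-body (Planck) weight. -/
theorem tauBeta_memLp_and_norm_sq (β φ : ℝ) (hβ : 0 < β)
    (f : ℝ × unitSphere2 → ℂ) (hf : Measurable f)
    (hint : IntegrableOn
      (fun q : ℝ × unitSphere2 =>
        (1 + 2 / (Real.exp (β * q.1) - 1)) * ‖f q‖ ^ 2 * q.1 ^ 2)
      (Set.Ioi (0 : ℝ) ×ˢ Set.univ) ((volume : Measure ℝ).prod sphereMeasure)) :
    MemLp (tauBeta β φ f) 2 ((volume : Measure ℝ).prod sphereMeasure) ∧
      (∫ q, ‖tauBeta β φ f q‖ ^ 2 ∂((volume : Measure ℝ).prod sphereMeasure)) =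
        ∫ q in Set.Ioi (0 : ℝ) ×ˢ (Set.univ : Set unitSphere2),
          (1 + 2 / (Real.exp (β * q.1) - 1)) * ‖f q‖ ^ 2 * q.1 ^ 2
          ∂((volume : Measure ℝ).prod sphereMeasure) := by
  classical
  set μ := (volume : Measure ℝ).prod sphereMeasure with hμdef
  set S : Set (ℝ × unitSphere2) := Set.Ioi (0:ℝ) ×ˢ Set.univ with hSdef
  set S' : Set (ℝ × unitSphere2) := Set.Iio (0:ℝ) ×ˢ Set.univ with hS'def
  have hS : MeasurableSet S := measurableSet_Ioi.prod MeasurableSet.univ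
  have hS' : MeasurableSet S' := measurableSet_Iio.prod MeasurableSet.univ
  have hEgt : ∀ q : ℝ × unitSphere2, q ∈ S → 1 < Real.exp (β * q.1) := by
    intro q hq
    have hu : 0 < q.1 := hq.1
    have := Real.exp_lt_exp.mpr (show (0:ℝ) < β * q.1 by positivity)
    rwa [Real.exp_zero] at this
  -- weight pieces
  set W1 : ℝ × unitSphere2 → ℝ :=
    fun q => (1 + 1 / (Real.exp (β * q.1) - 1)) * ‖f q‖ ^ 2 * q.1 ^ 2 with hW1def
  set W2 : ℝ × unitSphere2 → ℝ :=
    fun q => (1 / (Real.exp (β * q.1) - 1)) * ‖f q‖ ^ 2 * q.1 ^ 2 with hW2def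
  have mcoef : Measurable fun q : ℝ × unitSphere2 => 1 / (Real.exp (β * q.1) - 1) :=
    measurable_const.div ((measurable_const.mul measurable_fst).exp.sub measurable_const)
  have mbase : Measurable fun q : ℝ × unitSphere2 => ‖f q‖ ^ 2 * q.1 ^ 2 :=
    (hf.norm.pow measurable_const).mul (measurable_fst.pow measurable_const)
  have mW1 : Measurable W1 := by
    have : W1 = fun q => (1 + 1 / (Real.exp (β * q.1) - 1)) * (‖f q‖ ^ 2 * q.1 ^ 2) := by
      funext q; rw [hW1def]; ring
    rw [this]; exact (measurable_const.add mcoef).mul mbase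
  have mW2 : Measurable W2 := by
    have : W2 = fun q => (1 / (Real.exp (β * q.1) - 1)) * (‖f q‖ ^ 2 * q.1 ^ 2) := by
      funext q; rw [hW2def]; ring
    rw [this]; exact mcoef.mul mbase
  -- integrability of the pieces on S
  have hbound : ∀ i : ℝ × unitSphere2 → ℝ, Measurable i →
      (∀ q ∈ S, 0 ≤ i q ∧ i q ≤ (1 + 2 / (Real.exp (β * q.1) - 1)) * ‖f q‖ ^ 2 * q.1 ^ 2) →
      IntegrableOn i S μ := by
    intro i mi hi
    refine Integrable.mono' hint mi.aestronglyMeasurable ?_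
    rw [ae_restrict_iff' hS]
    filter_upwards with q hq
    rw [Real.norm_eq_abs, abs_of_nonneg (hi q hq).1]
    exact (hi q hq).2
  have hW1int : IntegrableOn W1 S μ := by
    refine hbound W1 mW1 fun q hq => ?_
    have hE := hEgt q hq
    have hE1 : (0:ℝ) < Real.exp (β * q.1) - 1 := by linarith
    have h1 : (0:ℝ) ≤ 1 / (Real.exp (β * q.1) - 1) := by positivity
    constructor
    · rw [hW1def]; positivity
    · rw [hW1def]
      exact mul_le_mul_of_nonneg_right
        (mul_le_mul_of_nonneg_right (by
          have h2 : 2 / (Real.exp (β * q.1) - 1) = 2 * (1 / (Real.exp (β * q.1) - 1)) := by ring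
          linarith) (by positivity)) (by positivity)
  have hW2int : IntegrableOn W2 S μ := by
    refine hbound W2 mW2 fun q hq => ?_
    have hE := hEgt q hq
    have hE1 : (0:ℝ) < Real.exp (β * q.1) - 1 := by linarith
    have h1 : (0:ℝ) ≤ 1 / (Real.exp (β * q.1) - 1) := by positivity
    constructor
    · rw [hW2def]; positivity
    · rw [hW2def]
      exact mul_le_mul_of_nonneg_right
        (mul_le_mul_of_nonneg_right (by
          have h2 : 2 / (Real.exp (β * q.1) - 1) = 2 * (1 / (Real.exp (β * q.1) - 1)) := by ring
          linarith) (by positivity)) (by positivity)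
  -- the squared-norm function
  set g : ℝ × unitSphere2 → ℝ := fun q => ‖tauBeta β φ f q‖ ^ 2 with hgdef
  have hEqOn1 : Set.EqOn W1 g S := by
    intro q hq
    have hu : 0 < q.1 := hq.1
    exact (norm_sq_tauBeta_pos β φ hβ f hu q.2).symm
  have hgS : IntegrableOn g S μ := hW1int.congr_fun hEqOn1 hS
  -- reflection
  set T : ℝ × unitSphere2 → ℝ × unitSphere2 := fun q => (-q.1, q.2) with hTdef
  have hTemb : MeasurableEmbedding T :=
    ((MeasurableEquiv.neg ℝ).prodCongr (MeasurableEquiv.refl unitSphere2)).measurableEmbedding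
  have hMP : MeasurePreserving T μ μ :=
    (Measure.measurePreserving_neg (volume : Measure ℝ)).prod (MeasurePreserving.id sphereMeasure)
  have hpre : T ⁻¹' S' = S := by
    ext q
    simp only [hTdef, hS'def, hSdef, Set.mem_preimage, Set.mem_prod, Set.mem_Iio,
      Set.mem_Ioi, Set.mem_univ, and_true]
    exact neg_lt_zero
  have hMP' : MeasurePreserving T (μ.restrict S) (μ.restrict S') := by
    have := hMP.restrict_preimage hS'
    rwa [hpre] at this
  have hEqOn2 : Set.EqOn W2 (g ∘ T) S := by
    intro q hq
    have hu : 0 < q.1 := hq.1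
    exact (norm_sq_tauBeta_neg β φ hβ f hu q.2).symm
  have hcomp : IntegrableOn (g ∘ T) S μ := hW2int.congr_fun hEqOn2 hS
  have hgS' : IntegrableOn g S' μ := (hMP'.integrable_comp_emb hTemb).mp hcomp
  -- union covers a.e.
  have hdisj : Disjoint S S' := by
    rw [Set.disjoint_left]
    intro q hq hq'
    exact absurd (Set.mem_Iio.mp hq'.1) (lt_asymm hq.1)
  have hcompl : μ (S ∪ S')ᶜ = 0 := by
    have hset : (S ∪ S')ᶜ = ({(0:ℝ)} ×ˢ (Set.univ : Set unitSphere2)) := by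
      ext q
      simp only [Set.mem_compl_iff, Set.mem_union, hSdef, hS'def, Set.mem_prod, Set.mem_Ioi,
        Set.mem_Iio, Set.mem_univ, and_true, Set.mem_singleton_iff]
      push_neg
      constructor
      · rintro ⟨h1, h2⟩; linarith
      · intro h; constructor <;> simp [h]
    rw [hset, hμdef, Measure.prod_prod]
    simp
  have hae : ∀ᵐ q ∂μ, q ∈ S ∪ S' := by
    rw [ae_iff]
    simpa [Set.compl_def] using hcompl
  have hrestr : μ.restrict (S ∪ S') = μ := Measure.restrict_eq_self_of_ae_mem hae
  have hg_int : Integrable g μ := by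
    rw [← hrestr]
    exact hgS.union hgS'
  have hmeas := measurable_tauBeta β φ hf
  refine ⟨(memLp_two_iff_integrable_sq_norm hmeas.aestronglyMeasurable).mpr hg_int, ?_⟩
  -- the integral identity
  have step1 : (∫ q, g q ∂μ) = (∫ q in S, g q ∂μ) + ∫ q in S', g q ∂μ := by
    conv_lhs => rw [← hrestr]
    exact setIntegral_union hdisj hS' hgS hgS'
  have step2 : (∫ q in S, g q ∂μ) = ∫ q in S, W1 q ∂μ :=
    (setIntegral_congr_fun hS hEqOn1).symm
  have step3 : (∫ q in S', g q ∂μ) = ∫ q in S, W2 q ∂μ := by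
    rw [← hMP'.integral_comp hTemb g]
    exact (setIntegral_congr_fun hS hEqOn2).symm
  rw [show (∫ q, ‖tauBeta β φ f q‖ ^ 2 ∂μ) = ∫ q, g q ∂μ from rfl,
    step1, step2, step3, ← integral_add hW1int hW2int]
  refine setIntegral_congr_fun hS fun q hq => ?_
  rw [hW1def, hW2def]
  ring
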